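/- Finite-blocklength channel coding converse (information-spectrum form): let 𝒴 be a finite set, n, M ∈ ℕ, and for each l ∈ {1,…,n} let W_l(·|0), W_l(·|1) be strictly positive probability mass functions on 𝒴 and Q_l a strictly positive probability mass function on 𝒴. Let W̄ be uniformly distributed on {1,…,M}, let Z^n = (Z_1,…,Z_n) ∈ {0,1}^n be any (possibly randomized) function of W̄, let Y_1,…,Y_n be conditionally independent given (W̄, Z^n) with Y_l distributed as W_l(·|Z_l), and let ĝ : 𝒴^n → {1,…,M} be a decoder with error probability Pr{ ĝ(Y^n) ≠ W̄ } ≤ ε for some ε ∈ (0,1). Then for every κ ∈ (0, 1 − ε): log M ≤ sup{ ψ ∈ ℝ : Pr{ Σ_{l=1}^n log( W_l(Y_l | Z_l) / Q_l(Y_l) ) ≤ ψ } ≤ ε + κ } − log κ. -/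

import Mathlib

open Finset
open scoped Classical

noncomputable section

/-- finite-blocklength channel coding converse (information-spectrum form).
A uniform message `W̄` on `{1,…,M}` is encoded (possibly stochastically, via the kernel
`enc`) into `Z^n ∈ {0,1}^n`; `Y_l ∼ W_l(·|Z_l)` conditionally independently; a decoder
`dec` has error probability at most `ε`.  Then for every `κ ∈ (0, 1 − ε)`,
`log M ≤ sup{ψ : Pr{Σ_l log(W_l(Y_l|Z_l)/Q_l(Y_l)) ≤ ψ} ≤ ε + κ} − log κ`. -/
theorem statement19 (Yt : Type) [Fintype Yt] (n M : ℕ) (hM : 1 ≤ M)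
    (W : Fin n → Yt → Bool → ℝ) (Q : Fin n → Yt → ℝ)
    (hW0 : ∀ l y z, 0 < W l y z) (hW1 : ∀ l z, ∑ y : Yt, W l y z = 1)
    (hQ0 : ∀ l y, 0 < Q l y) (hQ1 : ∀ l, ∑ y : Yt, Q l y = 1)
    (enc : Fin M → (Fin n → Bool) → ℝ)
    (henc0 : ∀ w z, 0 ≤ enc w z) (henc1 : ∀ w, ∑ z : Fin n → Bool, enc w z = 1)
    (dec : (Fin n → Yt) → Fin M)
    (ε κ : ℝ) (hε : ε ∈ Set.Ioo (0 : ℝ) 1) (hκ : 0 < κ) (hκ2 : κ < 1 - ε)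
    (herr : ∑ w : Fin M, ∑ z : Fin n → Bool, ∑ y : Fin n → Yt,
        (if dec y ≠ w then (M : ℝ)⁻¹ * enc w z * ∏ l, W l (y l) (z l) else 0) ≤ ε) :
    Real.log M ≤
      sSup {ψ : ℝ |
          ∑ w : Fin M, ∑ z : Fin n → Bool, ∑ y : Fin n → Yt,
            (if (∑ l, Real.log (W l (y l) (z l) / Q l (y l))) ≤ ψ
              then (M : ℝ)⁻¹ * enc w z * ∏ l, W l (y l) (z l) else 0) ≤ ε + κ} -
        Real.log κ := by
  have hMpos : (0:ℝ) < M := by exact_mod_cast Nat.lt_of_lt_of_le Nat.zero_lt_one hM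
  set ψ₀ : ℝ := Real.log κ + Real.log M with hψ₀
  have hexp : Real.exp ψ₀ = κ * M := by
    rw [hψ₀, Real.exp_add, Real.exp_log hκ, Real.exp_log hMpos]
  -- product-of-sums identities
  have hsumW : ∀ z : Fin n → Bool, ∑ y : Fin n → Yt, ∏ l, W l (y l) (z l) = 1 := by
    intro z
    have h := (Finset.prod_univ_sum (fun _ : Fin n => (Finset.univ : Finset Yt))
      (fun l a => W l a (z l))).symm
    rw [Fintype.piFinset_univ] at h
    rw [h]
    exact Finset.prod_eq_one fun l _ => hW1 l (z l)
  have hsumQ : ∑ y : Fin n → Yt, ∏ l, Q l (y l) = 1 := by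
    have h := (Finset.prod_univ_sum (fun _ : Fin n => (Finset.univ : Finset Yt))
      (fun l a => Q l a)).symm
    rw [Fintype.piFinset_univ] at h
    rw [h]
    exact Finset.prod_eq_one fun l _ => hQ1 l
  -- key step: ψ₀ belongs to the set
  have key : ∑ w : Fin M, ∑ z : Fin n → Bool, ∑ y : Fin n → Yt,
      (if (∑ l, Real.log (W l (y l) (z l) / Q l (y l))) ≤ ψ₀
        then (M : ℝ)⁻¹ * enc w z * ∏ l, W l (y l) (z l) else 0) ≤ ε + κ := by
    have hpoint : ∀ (w : Fin M) (z : Fin n → Bool) (y : Fin n → Yt),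
        (if (∑ l, Real.log (W l (y l) (z l) / Q l (y l))) ≤ ψ₀
          then (M:ℝ)⁻¹ * enc w z * ∏ l, W l (y l) (z l) else 0)
        ≤ (if dec y ≠ w then (M:ℝ)⁻¹ * enc w z * ∏ l, W l (y l) (z l) else 0)
          + (if dec y = w then κ * enc w z * ∏ l, Q l (y l) else 0) := by
      intro w z y
      have hpW : 0 < ∏ l, W l (y l) (z l) := Finset.prod_pos fun l _ => hW0 _ _ _
      have hpQ : 0 < ∏ l, Q l (y l) := Finset.prod_pos fun l _ => hQ0 _ _
      have hp0 : 0 ≤ (M:ℝ)⁻¹ * enc w z * ∏ l, W l (y l) (z l) :=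
        mul_nonneg (mul_nonneg (inv_nonneg.2 hMpos.le) (henc0 w z)) hpW.le
      have hq0 : 0 ≤ κ * enc w z * ∏ l, Q l (y l) :=
        mul_nonneg (mul_nonneg hκ.le (henc0 w z)) hpQ.le
      by_cases hc : (∑ l, Real.log (W l (y l) (z l) / Q l (y l))) ≤ ψ₀
      · rw [if_pos hc]
        by_cases hd : dec y = w
        · rw [if_neg (by simpa using hd), if_pos hd, zero_add]
          have h1 : Real.log (∏ l, (W l (y l) (z l) / Q l (y l))) ≤ ψ₀ := by
            rw [Real.log_prod (fun l _ => ne_of_gt (div_pos (hW0 _ _ _) (hQ0 _ _)))]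
            exact hc
          rw [Finset.prod_div_distrib] at h1
          have h2 : (∏ l, W l (y l) (z l)) / ∏ l, Q l (y l) ≤ Real.exp ψ₀ := by
            rw [← Real.log_le_iff_le_exp (div_pos hpW hpQ)]
            exact h1
          rw [hexp, div_le_iff₀ hpQ] at h2
          have h3 := mul_le_mul_of_nonneg_left h2
            (mul_nonneg (inv_nonneg.2 hMpos.le) (henc0 w z))
          calc (M:ℝ)⁻¹ * enc w z * ∏ l, W l (y l) (z l)
              ≤ (M:ℝ)⁻¹ * enc w z * (κ * ↑M * ∏ l, Q l (y l)) := h3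
            _ = κ * enc w z * ∏ l, Q l (y l) := by
                field_simp
        · rw [if_pos hd, if_neg hd, add_zero]
      · rw [if_neg hc]
        exact add_nonneg (by by_cases h : dec y ≠ w <;> simp [h, hp0])
          (by by_cases h : dec y = w <;> simp [h, hq0])
    -- sum of the second (correct-decoding) term equals κ
    have hsecond : ∑ w : Fin M, ∑ z : Fin n → Bool, ∑ y : Fin n → Yt,
        (if dec y = w then κ * enc w z * ∏ l, Q l (y l) else 0) = κ := by
      have step1 : ∀ (w : Fin M) (z : Fin n → Bool),
          ∑ y : Fin n → Yt, (if dec y = w then κ * enc w z * ∏ l, Q l (y l) else 0)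
          = κ * enc w z * ∑ y : Fin n → Yt, (if dec y = w then ∏ l, Q l (y l) else 0) := by
        intro w z
        rw [Finset.mul_sum]
        refine Finset.sum_congr rfl fun y _ => ?_
        by_cases h : dec y = w <;> simp [h]
      simp only [step1]
      have step2 : ∀ w : Fin M,
          ∑ z : Fin n → Bool, κ * enc w z *
            (∑ y : Fin n → Yt, (if dec y = w then ∏ l, Q l (y l) else 0))
          = κ * (∑ y : Fin n → Yt, (if dec y = w then ∏ l, Q l (y l) else 0)) := by
        intro w
        rw [← Finset.sum_mul, ← Finset.mul_sum, henc1 w, mul_one]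
      simp only [step2]
      rw [← Finset.mul_sum, Finset.sum_comm]
      have step3 : ∀ y : Fin n → Yt,
          ∑ w : Fin M, (if dec y = w then ∏ l, Q l (y l) else 0) = ∏ l, Q l (y l) := by
        intro y
        rw [Finset.sum_ite_eq]
        simp
      simp only [step3]
      rw [hsumQ, mul_one]
    calc ∑ w : Fin M, ∑ z : Fin n → Bool, ∑ y : Fin n → Yt,
        (if (∑ l, Real.log (W l (y l) (z l) / Q l (y l))) ≤ ψ₀
          then (M : ℝ)⁻¹ * enc w z * ∏ l, W l (y l) (z l) else 0)
        ≤ ∑ w : Fin M, ∑ z : Fin n → Bool, ∑ y : Fin n → Yt,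
            ((if dec y ≠ w then (M:ℝ)⁻¹ * enc w z * ∏ l, W l (y l) (z l) else 0)
              + (if dec y = w then κ * enc w z * ∏ l, Q l (y l) else 0)) := by
          refine Finset.sum_le_sum fun w _ => Finset.sum_le_sum fun z _ =>
            Finset.sum_le_sum fun y _ => hpoint w z y
      _ = (∑ w : Fin M, ∑ z : Fin n → Bool, ∑ y : Fin n → Yt,
            (if dec y ≠ w then (M:ℝ)⁻¹ * enc w z * ∏ l, W l (y l) (z l) else 0))
          + (∑ w : Fin M, ∑ z : Fin n → Bool, ∑ y : Fin n → Yt,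
            (if dec y = w then κ * enc w z * ∏ l, Q l (y l) else 0)) := by
          simp [Finset.sum_add_distrib]
      _ ≤ ε + κ := by rw [hsecond]; exact add_le_add_left herr κ
  -- the set is bounded above
  have hYne : Nonempty (Fin n → Yt) := by
    rcases Nat.eq_zero_or_pos n with hn | hn
    · subst hn; exact ⟨fun i => i.elim0⟩
    · have : Nonempty Yt := by
        by_contra h
        rw [not_nonempty_iff] at h
        have h1 := hW1 ⟨0, hn⟩ true
        rw [Finset.univ_eq_empty, Finset.sum_empty] at h1
        norm_num at h1
      exact ⟨fun _ => Classical.arbitrary Yt⟩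
  have hT : (Finset.univ : Finset ((Fin n → Yt) × (Fin n → Bool))).Nonempty :=
    Finset.univ_nonempty
  have hBdd : BddAbove {ψ : ℝ |
      ∑ w : Fin M, ∑ z : Fin n → Bool, ∑ y : Fin n → Yt,
        (if (∑ l, Real.log (W l (y l) (z l) / Q l (y l))) ≤ ψ
          then (M : ℝ)⁻¹ * enc w z * ∏ l, W l (y l) (z l) else 0) ≤ ε + κ} := by
    refine ⟨Finset.univ.sup' hT (fun q : (Fin n → Yt) × (Fin n → Bool) =>
      ∑ l, Real.log (W l (q.1 l) (q.2 l) / Q l (q.1 l))), fun ψ hψ => ?_⟩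
    by_contra hlt
    push_neg at hlt
    have hall : ∀ (y : Fin n → Yt) (z : Fin n → Bool),
        (∑ l, Real.log (W l (y l) (z l) / Q l (y l))) ≤ ψ := fun y z =>
      le_of_lt (lt_of_le_of_lt (Finset.le_sup'
        (fun q : (Fin n → Yt) × (Fin n → Bool) =>
          ∑ l, Real.log (W l (q.1 l) (q.2 l) / Q l (q.1 l)))
        (Finset.mem_univ (y, z))) hlt)
    have htot : ∑ w : Fin M, ∑ z : Fin n → Bool, ∑ y : Fin n → Yt,
        (if (∑ l, Real.log (W l (y l) (z l) / Q l (y l))) ≤ ψ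
          then (M : ℝ)⁻¹ * enc w z * ∏ l, W l (y l) (z l) else 0) = 1 := by
      have heq : ∀ (w : Fin M) (z : Fin n → Bool) (y : Fin n → Yt),
          (if (∑ l, Real.log (W l (y l) (z l) / Q l (y l))) ≤ ψ
            then (M : ℝ)⁻¹ * enc w z * ∏ l, W l (y l) (z l) else 0)
          = (M : ℝ)⁻¹ * enc w z * ∏ l, W l (y l) (z l) := fun w z y => if_pos (hall y z)
      simp only [heq]
      have h1 : ∀ (w : Fin M) (z : Fin n → Bool),
          ∑ y : Fin n → Yt, (M:ℝ)⁻¹ * enc w z * ∏ l, W l (y l) (z l)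
          = (M:ℝ)⁻¹ * enc w z := by
        intro w z; rw [← Finset.mul_sum, hsumW z, mul_one]
      simp only [h1]
      have h2 : ∀ w : Fin M, ∑ z : Fin n → Bool, (M:ℝ)⁻¹ * enc w z = (M:ℝ)⁻¹ := by
        intro w; rw [← Finset.mul_sum, henc1 w, mul_one]
      simp only [h2]
      rw [Finset.sum_const, Finset.card_univ, Fintype.card_fin, nsmul_eq_mul]
      field_simp
    rw [Set.mem_setOf_eq, htot] at hψ
    have : ε + κ < 1 := by linarith
    linarith
  have hle : ψ₀ ≤ sSup {ψ : ℝ |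
      ∑ w : Fin M, ∑ z : Fin n → Bool, ∑ y : Fin n → Yt,
        (if (∑ l, Real.log (W l (y l) (z l) / Q l (y l))) ≤ ψ
          then (M : ℝ)⁻¹ * enc w z * ∏ l, W l (y l) (z l) else 0) ≤ ε + κ} :=
    le_csSup hBdd key
  linarith
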